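/- Let L be a first-order language, κ an infinite cardinal, M a κ-compact L-structure, and (I, ≤) a directed partial order of cardinality less than κ. Let (X i, v j i) be an ∅-definable inverse system over I and (f i : Y → X i) a compatible family of ∅-definable maps from an ∅-definable set Y ⊆ (Fin m → M). Assume the induced map from Y to the inverse limit of points is surjective, i.e. for every family (x i)_{i ∈ I} with x i ∈ X i and v j i (x j) = x i for all i ≤ j, there exists y ∈ Y with f i y = x i for all i. Then for every i ∈ I there exists j ≥ i such that the image v j i '' (X j) equals the image f i '' Y. -/

import Mathlib

open FirstOrder Cardinal

/-- An `L`-structure `M` is `κ`-compact if every set of fewer than `κ` formulas (in any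
variable index type) that is finitely realized in `M` is realized in `M`. -/
def KappaCompact (L : FirstOrder.Language.{0, 0}) (κ : Cardinal.{0}) (M : Type)
    [L.Structure M] : Prop :=
  ∀ (α : Type) (Φ : Set (L.Formula α)), #Φ < κ →
    (∀ Φ₀ : Set (L.Formula α), Φ₀ ⊆ Φ → Φ₀.Finite →
      ∃ v : α → M, ∀ φ ∈ Φ₀, φ.Realize v) →
    ∃ v : α → M, ∀ φ ∈ Φ, φ.Realize v

/-- A function `g` from a subset `X` of `Fin n → M` to `Fin m → M` is ∅-definable if its
graph is a ∅-definable subset of `(Fin n ⊕ Fin m) → M`. -/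
def DefinableFun (L : FirstOrder.Language.{0, 0}) (M : Type) [L.Structure M]
    {n m : ℕ} (X : Set (Fin n → M)) (g : (Fin n → M) → (Fin m → M)) : Prop :=
  Set.Definable (∅ : Set M) L
    {z : Fin n ⊕ Fin m → M | z ∘ Sum.inl ∈ X ∧ g (z ∘ Sum.inl) = z ∘ Sum.inr}

/-- A ∅-definable inverse (cofiltered) system of ∅-definable sets and ∅-definable maps,
indexed by a partial order `I`: for `i ≤ j`, `v i j : X j → X i`. -/
structure DefInverseSystem (L : FirstOrder.Language.{0, 0}) (M : Type) [L.Structure M]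
    (I : Type) [PartialOrder I] where
  n : I → ℕ
  X : ∀ i, Set (Fin (n i) → M)
  X_def : ∀ i, Set.Definable (∅ : Set M) L (X i)
  v : ∀ i j, i ≤ j → (Fin (n j) → M) → (Fin (n i) → M)
  v_mem : ∀ i j (h : i ≤ j), ∀ x ∈ X j, v i j h x ∈ X i
  v_def : ∀ i j (h : i ≤ j), DefinableFun L M (X j) (v i j h)
  v_id : ∀ i, ∀ x ∈ X i, v i i le_rfl x = x
  v_comp : ∀ i j k (hij : i ≤ j) (hjk : j ≤ k), ∀ x ∈ X k,
    v i j hij (v j k hjk x) = v i k (hij.trans hjk) x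

theorem pro_surjective_on_limit_images_agree
    (L : FirstOrder.Language.{0, 0}) (κ : Cardinal.{0}) (M : Type) [L.Structure M]
    (hκ : ℵ₀ ≤ κ) (hM : KappaCompact L κ M)
    (I : Type) [PartialOrder I] [IsDirected I (· ≤ ·)] (hI : #I < κ)
    (S : DefInverseSystem L M I)
    {m : ℕ} (Y : Set (Fin m → M)) (hY : Set.Definable (∅ : Set M) L Y)
    (f : ∀ i, (Fin m → M) → (Fin (S.n i) → M))
    (f_mem : ∀ i, ∀ y ∈ Y, f i y ∈ S.X i)
    (f_def : ∀ i, DefinableFun L M Y (f i))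
    (f_compat : ∀ i j (h : i ≤ j), ∀ y ∈ Y, S.v i j h (f j y) = f i y)
    (hsurj : ∀ x : ∀ i, Fin (S.n i) → M, (∀ i, x i ∈ S.X i) →
      (∀ i j (h : i ≤ j), S.v i j h (x j) = x i) → ∃ y ∈ Y, ∀ i, f i y = x i) :
    ∀ i, ∃ j, ∃ h : i ≤ j, S.v i j h '' S.X j = f i '' Y := by
  intro i
  classical
  by_contra hcon
  push_neg at hcon
  have key : ∀ j (h : i ≤ j), f i '' Y ⊆ S.v i j h '' S.X j := by
    rintro j h a ⟨y, hy, rfl⟩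
    exact ⟨f j y, f_mem j y hy, f_compat i j h y hy⟩
  have exX : ∀ j (h : i ≤ j), ∃ x ∈ S.X j, S.v i j h x ∉ f i '' Y := by
    intro j h
    by_contra hc
    push_neg at hc
    refine hcon j h (Set.Subset.antisymm ?_ (key j h))
    rintro a ⟨x, hx, rfl⟩
    exact hc x hx
  haveI : Nonempty I := ⟨i⟩
  cases isEmpty_or_nonempty M with
  | inl hemp =>
    have subsing : ∀ (k : ℕ) (a b : Fin k → M), a = b := fun k a b =>
      funext fun t => (hemp.false (a t)).elim
    have hXne : ∀ j, (S.X j).Nonempty := by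
      intro j
      obtain ⟨k, hik, hjk⟩ := directed_of (· ≤ ·) i j
      obtain ⟨x, hx, -⟩ := exX k hik
      exact ⟨S.v j k hjk x, S.v_mem _ _ _ _ hx⟩
    choose x hx using hXne
    obtain ⟨y, hy, hfy⟩ := hsurj x hx (fun j k h => subsing _ _ _)
    obtain ⟨x0, hx0, hnot⟩ := exX i le_rfl
    exact hnot ((subsing _ (f i y) (S.v i i le_rfl x0)) ▸ ⟨y, hy, rfl⟩)
  | inr hne =>
    -- the image f i '' Y is ∅-definable
    have himg : Set.Definable (∅ : Set M) L (f i '' Y) := by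
      have h0 : Set.Definable (∅ : Set M) L
          {z : Fin m ⊕ Fin (S.n i) → M | z ∘ Sum.inl ∈ Y ∧
            f i (z ∘ Sum.inl) = z ∘ Sum.inr} := f_def i
      have h1 := Set.Definable.preimage_comp (M := M) (L := L) (A := (∅ : Set M))
        (Sum.swap : Fin m ⊕ Fin (S.n i) → Fin (S.n i) ⊕ Fin m) h0
      have h2 := h1.image_comp_sumInl_fin m
      have h3 : (fun g : Fin (S.n i) ⊕ Fin m → M => g ∘ Sum.inl) ''
          ((fun g : Fin (S.n i) ⊕ Fin m → M => g ∘ Sum.swap) ⁻¹'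
            {z : Fin m ⊕ Fin (S.n i) → M | z ∘ Sum.inl ∈ Y ∧
              f i (z ∘ Sum.inl) = z ∘ Sum.inr}) = f i '' Y := by
        ext a
        constructor
        · rintro ⟨z, hz, rfl⟩
          exact ⟨z ∘ Sum.inr, hz.1, hz.2⟩
        · rintro ⟨y, hy, rfl⟩
          exact ⟨Sum.elim (f i y) y, ⟨hy, rfl⟩, rfl⟩
      rw [← h3]
      exact h2
    -- index type for the conditions
    set α := (j : I) × Fin (S.n j) with hα
    set e : ∀ j, Fin (S.n j) → α := fun j t => ⟨j, t⟩ with he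
    set C := {p : I × I // p.1 ≤ p.2} ⊕ Unit with hC
    set P : C → Set (α → M) := Sum.elim
      (fun p => {w : α → M | w ∘ e p.1.2 ∈ S.X p.1.2 ∧
        S.v p.1.1 p.1.2 p.2 (w ∘ e p.1.2) = w ∘ e p.1.1})
      (fun _ => {w : α → M | w ∘ e i ∉ f i '' Y}) with hP
    have hPdef : ∀ c, Set.Definable (∅ : Set M) L (P c) := by
      rintro (p | u)
      · have h0 : Set.Definable (∅ : Set M) L
            {z : Fin (S.n p.1.2) ⊕ Fin (S.n p.1.1) → M | z ∘ Sum.inl ∈ S.X p.1.2 ∧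
              S.v p.1.1 p.1.2 p.2 (z ∘ Sum.inl) = z ∘ Sum.inr} := S.v_def p.1.1 p.1.2 p.2
        exact h0.preimage_comp (Sum.elim (e p.1.2) (e p.1.1))
      · exact (himg.compl).preimage_comp (e i)
    choose φ hφ using fun c => Set.empty_definable_iff.mp (hPdef c)
    set Φ : Set (L.Formula α) := Set.range φ with hΦ
    have hcard : #Φ < κ := by
      refine lt_of_le_of_lt Cardinal.mk_range_le ?_
      have h1 : #C ≤ #(I × I) + 1 := by
        rw [hC, Cardinal.mk_sum, Cardinal.lift_id, Cardinal.lift_id, Cardinal.mk_punit]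
        exact add_le_add (Cardinal.mk_subtype_le _) le_rfl
      refine h1.trans_lt (Cardinal.add_lt_of_lt hκ ?_ ?_)
      · have := Cardinal.mul_lt_of_lt hκ hI hI
        simpa [Cardinal.mk_prod, Cardinal.lift_id] using this
      · exact Cardinal.one_lt_aleph0.trans_le hκ
    have hfin : ∀ Φ₀ : Set (L.Formula α), Φ₀ ⊆ Φ → Φ₀.Finite →
        ∃ w : α → M, ∀ ψ ∈ Φ₀, ψ.Realize w := by
      intro Φ₀ hsub hΦ₀fin
      haveI := hΦ₀fin.to_subtype
      have hg : ∀ ψ : Φ₀, ∃ c, φ c = (ψ : L.Formula α) := fun ψ => hsub ψ.2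
      choose g hg using hg
      set C₀ : Set C := Set.range g with hC₀
      have hC₀fin : C₀.Finite := Set.finite_range g
      -- collect all relevant indices
      set idx1 : C → I := Sum.elim (fun p => p.1.1) (fun _ => i) with hidx1
      set idx2 : C → I := Sum.elim (fun p => p.1.2) (fun _ => i) with hidx2
      set T : Set I := insert i (idx1 '' C₀ ∪ idx2 '' C₀) with hT
      have hTfin : T.Finite := ((hC₀fin.image idx1).union (hC₀fin.image idx2)).insert i
      obtain ⟨J, hJ⟩ := hTfin.toFinset.exists_le
      have hJT : ∀ t ∈ T, t ≤ J := fun t ht => hJ t (hTfin.mem_toFinset.mpr ht)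
      have hiJ : i ≤ J := hJT i (Set.mem_insert _ _)
      obtain ⟨xs, hxs, hxnot⟩ := exX J hiJ
      set w : α → M := fun a =>
        if h : a.1 ≤ J then S.v a.1 J h xs a.2 else Classical.arbitrary M with hw
      have hwc : ∀ j (h : j ≤ J), w ∘ e j = S.v j J h xs := by
        intro j h
        funext t
        simp only [hw, Function.comp_apply]
        rw [dif_pos h]
      have hreal : ∀ c ∈ C₀, w ∈ P c := by
        rintro (p | u) hcC₀
        · have h2J : p.1.2 ≤ J :=
            hJT _ (Set.mem_insert_of_mem _ (Or.inr ⟨_, hcC₀, rfl⟩))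
          have h1J : p.1.1 ≤ J := p.2.trans h2J
          constructor
          · rw [hwc _ h2J]
            exact S.v_mem _ _ _ _ hxs
          · rw [hwc _ h2J, hwc _ h1J]
            exact S.v_comp _ _ _ p.2 h2J xs hxs
        · show w ∘ e i ∉ f i '' Y
          rw [hwc _ hiJ]
          exact hxnot
      refine ⟨w, ?_⟩
      intro ψ hψ
      have hwP := hreal (g ⟨ψ, hψ⟩) ⟨⟨ψ, hψ⟩, rfl⟩
      rw [hφ _] at hwP
      have hc := hg ⟨ψ, hψ⟩
      rw [hc] at hwP
      exact hwP
    obtain ⟨w, hwall⟩ := hM α Φ hcard hfin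
    have hPall : ∀ c, w ∈ P c := by
      intro c
      rw [hφ c]
      exact hwall (φ c) (Set.mem_range_self c)
    set x : ∀ j, Fin (S.n j) → M := fun j => w ∘ e j with hx
    have hxmem : ∀ j, x j ∈ S.X j := fun j =>
      (hPall (Sum.inl ⟨(j, j), le_rfl⟩)).1
    have hxcomp : ∀ j k (h : j ≤ k), S.v j k h (x k) = x j := fun j k h =>
      (hPall (Sum.inl ⟨(j, k), h⟩)).2
    obtain ⟨y, hy, hfy⟩ := hsurj x hxmem hxcomp
    exact (hPall (Sum.inr ())) ⟨y, hy, hfy i⟩
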